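/- Let F: {0,1}^N → {0,1} be a total boolean function with block sensitivity bs(F) = k, witnessed at input x' by disjoint sensitive blocks B_1,...,B_k. Define the symmetric 0/1 matrix Γ by Γ[x', x'^{B_j}] = Γ[x'^{B_j}, x'] = 1 for j = 1,...,k, and 0 elsewhere. Then λ(Γ) = √k and max_i λ(Γ_i) = 1, where Γ_i zeroes out entries with x_i = y_i. -/
import Mathlib

/-- Spectral norm (largest singular value) of a real matrix. -/
noncomputable def specNorm {n : Type*} [Fintype n] [DecidableEq n] (M : Matrix n n ℝ) : ℝ :=
  ‖Matrix.toEuclideanCLM (𝕜 := ℝ) M‖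

lemma euclid_norm_sq {α : Type*} [Fintype α] (g : EuclideanSpace ℝ α) :
    ‖g‖ ^ 2 = ∑ u, g u ^ 2 := by
  rw [EuclideanSpace.norm_eq, Real.sq_sqrt (by positivity)]
  simp [Real.norm_eq_abs, sq_abs]

lemma specNorm_star {α : Type*} [Fintype α] [DecidableEq α] (c : ℕ) (hc : 0 < c)
    (x0 : α) (ϕ : Fin c → α) (hϕx : ∀ j, ϕ j ≠ x0) (hinj : Function.Injective ϕ)
    (M : Matrix α α ℝ)
    (hM : ∀ u v, M u v =
      if (u = x0 ∧ ∃ j, v = ϕ j) ∨ (v = x0 ∧ ∃ j, u = ϕ j) then 1 else 0) :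
    specNorm M = Real.sqrt c := by
  classical
  set S : Finset α := Finset.univ.image ϕ with hS
  have hmemS : ∀ v, v ∈ S ↔ ∃ j, v = ϕ j := by
    intro v; simp [hS, eq_comm]
  have hx0S : x0 ∉ S := by
    rw [hmemS]; rintro ⟨j, hj⟩; exact hϕx j hj.symm
  have hcard : S.card = c := by
    rw [hS, Finset.card_image_of_injective _ hinj, Finset.card_univ, Fintype.card_fin]
  -- entries
  have hMx0 : ∀ v, M x0 v = if v ∈ S then 1 else 0 := by
    intro v; rw [hM]
    by_cases h : v ∈ S
    · rw [if_pos h, if_pos (Or.inl ⟨rfl, (hmemS v).1 h⟩)]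
    · rw [if_neg h, if_neg]
      rintro (⟨-, hj⟩ | ⟨-, j, hj⟩)
      · exact h ((hmemS v).2 hj)
      · exact hϕx j hj.symm
  have hMϕ : ∀ j v, M (ϕ j) v = if v = x0 then 1 else 0 := by
    intro j v; rw [hM]
    by_cases h : v = x0
    · rw [if_pos h, if_pos (Or.inr ⟨h, j, rfl⟩)]
    · rw [if_neg h, if_neg]
      rintro (⟨hj, -⟩ | ⟨hv, -⟩)
      · exact hϕx j hj
      · exact h hv
  have hM0 : ∀ u, u ≠ x0 → u ∉ S → ∀ v, M u v = 0 := by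
    intro u hu huS v; rw [hM, if_neg]
    rintro (⟨h, -⟩ | ⟨-, j, h⟩)
    · exact hu h
    · exact huS ((hmemS u).2 ⟨j, h⟩)
  -- mulVec
  have hmvx0 : ∀ f : α → ℝ, M.mulVec f x0 = ∑ v ∈ S, f v := by
    intro f
    simp only [Matrix.mulVec, dotProduct, hMx0, ite_mul, one_mul, zero_mul]
    rw [Finset.sum_ite_mem, Finset.univ_inter]
  have hmvϕ : ∀ (f : α → ℝ) j, M.mulVec f (ϕ j) = f x0 := by
    intro f j
    simp only [Matrix.mulVec, dotProduct, hMϕ, ite_mul, one_mul, zero_mul]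
    simp
  have hmv0 : ∀ (f : α → ℝ) u, u ≠ x0 → u ∉ S → M.mulVec f u = 0 := by
    intro f u hu huS
    simp only [Matrix.mulVec, dotProduct]
    rw [Finset.sum_eq_zero]
    intro v _; rw [hM0 u hu huS v, zero_mul]
  -- image norm squared
  have happly : ∀ (f : EuclideanSpace ℝ α) (u : α),
      (Matrix.toEuclideanCLM (𝕜 := ℝ) M f) u = M.mulVec (fun w => f w) u := by
    intro f u
    exact congrFun (Matrix.ofLp_toEuclideanCLM (𝕜 := ℝ) M f) u
  have himg : ∀ f : EuclideanSpace ℝ α,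
      ‖Matrix.toEuclideanCLM (𝕜 := ℝ) M f‖ ^ 2
        = (∑ v ∈ S, f v) ^ 2 + c * f x0 ^ 2 := by
    intro f
    rw [euclid_norm_sq]
    have hzero : ∀ u ∈ Finset.univ, u ∉ insert x0 S →
        (Matrix.toEuclideanCLM (𝕜 := ℝ) M f) u ^ 2 = 0 := by
      intro u _ hu
      rw [happly, hmv0 _ u (fun h => hu (by simp [h])) (fun h => hu (by simp [h]))]
      ring
    rw [← Finset.sum_subset (Finset.subset_univ (insert x0 S)) hzero,
      Finset.sum_insert hx0S, happly, hmvx0]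
    congr 1
    have : ∀ u ∈ S, (Matrix.toEuclideanCLM (𝕜 := ℝ) M f) u ^ 2 = f x0 ^ 2 := by
      intro u hu
      obtain ⟨j, hj⟩ := (hmemS u).1 hu
      rw [happly, hj, hmvϕ]
    rw [Finset.sum_congr rfl this, Finset.sum_const, hcard, nsmul_eq_mul]
  -- upper bound
  have hub : specNorm M ≤ Real.sqrt c := by
    apply ContinuousLinearMap.opNorm_le_bound _ (Real.sqrt_nonneg _)
    intro f
    have h1 : ‖Matrix.toEuclideanCLM (𝕜 := ℝ) M f‖ ^ 2 ≤ c * ‖f‖ ^ 2 := by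
      rw [himg, euclid_norm_sq]
      have h2 : (∑ v ∈ S, f v) ^ 2 ≤ c * ∑ v ∈ S, f v ^ 2 := by
        have := sq_sum_le_card_mul_sum_sq (s := S) (f := fun v => f v)
        rwa [hcard] at this
      have h3 : (∑ v ∈ S, f v ^ 2) + f x0 ^ 2 ≤ ∑ u, f u ^ 2 := by
        rw [add_comm, ← Finset.sum_insert (f := fun v => f v ^ 2) hx0S]
        exact Finset.sum_le_sum_of_subset_of_nonneg (Finset.subset_univ _)
          (fun u _ _ => sq_nonneg _)
      nlinarith [sq_nonneg (f x0)]
    have h4 : (0:ℝ) ≤ Real.sqrt c * ‖f‖ := by positivity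
    rw [← Real.sqrt_sq (norm_nonneg (Matrix.toEuclideanCLM (𝕜 := ℝ) M f)),
      ← Real.sqrt_sq h4]
    apply Real.sqrt_le_sqrt
    rw [mul_pow, Real.sq_sqrt (by positivity : (0:ℝ) ≤ (c:ℝ))]
    exact h1
  -- lower bound
  have hlb : Real.sqrt c ≤ specNorm M := by
    set v0 : EuclideanSpace ℝ α :=
      (WithLp.equiv 2 (α → ℝ)).symm
        (fun u => if u = x0 then Real.sqrt c else if u ∈ S then 1 else 0) with hv0
    have hv0app : ∀ u, v0 u = if u = x0 then Real.sqrt c else if u ∈ S then 1 else 0 :=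
      fun u => rfl
    have hv0x0 : v0 x0 = Real.sqrt c := by rw [hv0app, if_pos rfl]
    have hv0S : ∀ v ∈ S, v0 v = 1 := by
      intro v hv
      rw [hv0app, if_neg (by rintro rfl; exact hx0S hv), if_pos hv]
    have hnv0 : ‖v0‖ ^ 2 = 2 * c := by
      rw [euclid_norm_sq]
      have hzero : ∀ u ∈ Finset.univ, u ∉ insert x0 S → v0 u ^ 2 = 0 := by
        intro u _ hu
        rw [hv0app, if_neg (fun h => hu (by simp [h])), if_neg (fun h => hu (by simp [h]))]
        ring
      rw [← Finset.sum_subset (Finset.subset_univ (insert x0 S)) hzero,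
        Finset.sum_insert hx0S, hv0x0, Real.sq_sqrt (by positivity : (0:ℝ) ≤ (c:ℝ))]
      rw [Finset.sum_congr rfl (fun u hu => by rw [hv0S u hu]), Finset.sum_const, hcard]
      simp; ring
    have himv0 : ‖Matrix.toEuclideanCLM (𝕜 := ℝ) M v0‖ ^ 2 = 2 * c ^ 2 := by
      rw [himg, hv0x0, Real.sq_sqrt (by positivity : (0:ℝ) ≤ (c:ℝ))]
      rw [Finset.sum_congr rfl hv0S, Finset.sum_const, hcard]
      simp; ring
    have hv0pos : 0 < ‖v0‖ := by
      rcases (norm_nonneg v0).lt_or_eq with h | h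
      · exact h
      · exfalso
        rw [← h] at hnv0
        have hc' : (0:ℝ) < c := by exact_mod_cast hc
        nlinarith
    have hle := (Matrix.toEuclideanCLM (𝕜 := ℝ) M).le_opNorm v0
    have heq : ‖Matrix.toEuclideanCLM (𝕜 := ℝ) M v0‖ = Real.sqrt c * ‖v0‖ := by
      have h1 : (Real.sqrt c * ‖v0‖) ^ 2 = 2 * c ^ 2 := by
        rw [mul_pow, Real.sq_sqrt (by positivity : (0:ℝ) ≤ (c:ℝ)), hnv0]; ring
      have h2 : ‖Matrix.toEuclideanCLM (𝕜 := ℝ) M v0‖ ^ 2 = (Real.sqrt c * ‖v0‖) ^ 2 := by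
        rw [himv0, h1]
      have h3 := congrArg Real.sqrt h2
      rwa [Real.sqrt_sq (norm_nonneg _), Real.sqrt_sq (by positivity)] at h3
    rw [heq] at hle
    exact le_of_mul_le_mul_right hle hv0pos
  exact le_antisymm hub hlb

/-- The block-sensitivity adversary matrix (a star with `k` leaves, the leaves being
the sensitive-block flips of `x'`) has `λ(Γ) = √k` and `max_i λ(Γ_i) = 1`. -/
theorem stmt_11 (N k : ℕ) (hk : 0 < k)
    (F : (Fin N → Bool) → Bool) (x' : Fin N → Bool)
    (B : Fin k → Finset (Fin N))
    (hdisj : ∀ j j', j ≠ j' → Disjoint (B j) (B j'))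
    (hne : ∀ j, (B j).Nonempty)
    (flip : Fin k → (Fin N → Bool))
    (hflip : ∀ j i, flip j i = if i ∈ B j then !(x' i) else x' i)
    (hsens : ∀ j, F (flip j) ≠ F x')
    (Γ : Matrix (Fin N → Bool) (Fin N → Bool) ℝ)
    (hΓ : ∀ u v, Γ u v =
      if (u = x' ∧ ∃ j, v = flip j) ∨ (v = x' ∧ ∃ j, u = flip j) then 1 else 0)
    (Γi : Fin N → Matrix (Fin N → Bool) (Fin N → Bool) ℝ)
    (hΓi : ∀ i u v, Γi i u v = if u i ≠ v i then Γ u v else 0) :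
    specNorm Γ = Real.sqrt k ∧ (⨆ i : Fin N, specNorm (Γi i)) = 1 := by
  classical
  have hfx : ∀ j, flip j ≠ x' := by
    intro j h
    obtain ⟨i, hi⟩ := hne j
    have h1 := congrFun h i
    rw [hflip, if_pos hi] at h1
    simp at h1
  have hinj : Function.Injective flip := by
    intro j j' h
    by_contra hjj
    obtain ⟨i, hi⟩ := hne j
    have hi' : i ∉ B j' := fun hi' => Finset.disjoint_left.1 (hdisj j j' hjj) hi hi'
    have h1 := congrFun h i
    rw [hflip, hflip, if_pos hi, if_neg hi'] at h1
    simp at h1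
  have huniq : ∀ (i : Fin N) j j', i ∈ B j → i ∈ B j' → j = j' := by
    intro i j j' h h'
    by_contra hjj
    exact Finset.disjoint_left.1 (hdisj j j' hjj) h h'
  have hcase : ∀ i : Fin N, (∃ j, i ∈ B j) → specNorm (Γi i) = 1 := by
    rintro i ⟨j, hij⟩
    have key : ∀ u v, Γi i u v =
        if (u = x' ∧ ∃ _x : Fin 1, v = flip j) ∨ (v = x' ∧ ∃ _x : Fin 1, u = flip j)
          then 1 else 0 := by
      intro u v
      rw [hΓi]
      by_cases h1 : u = x' ∧ v = flip j
      · obtain ⟨hu, hv⟩ := h1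
        have hne1 : u i ≠ v i := by
          rw [hu, hv, hflip, if_pos hij]; simp
        rw [if_pos hne1, if_pos (Or.inl ⟨hu, (0 : Fin 1), hv⟩), hΓ,
          if_pos (Or.inl ⟨hu, j, hv⟩)]
      · by_cases h2 : v = x' ∧ u = flip j
        · obtain ⟨hv, hu⟩ := h2
          have hne1 : u i ≠ v i := by
            rw [hu, hv, hflip, if_pos hij]; simp
          rw [if_pos hne1, if_pos (Or.inr ⟨hv, (0 : Fin 1), hu⟩), hΓ,
            if_pos (Or.inr ⟨hv, j, hu⟩)]
        · have hR : ¬((u = x' ∧ ∃ _x : Fin 1, v = flip j) ∨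
              (v = x' ∧ ∃ _x : Fin 1, u = flip j)) := by
            rintro (⟨hu, -, hv⟩ | ⟨hv, -, hu⟩)
            exacts [h1 ⟨hu, hv⟩, h2 ⟨hv, hu⟩]
          rw [if_neg hR]
          by_cases hne1 : u i ≠ v i
          · rw [if_pos hne1, hΓ, if_neg]
            rintro (⟨hu, j', hv⟩ | ⟨hv, j', hu⟩)
            · by_cases hib : i ∈ B j'
              · exact h1 ⟨hu, by rwa [huniq i j' j hib hij] at hv⟩
              · apply hne1
                rw [hu, hv, hflip, if_neg hib]
            · by_cases hib : i ∈ B j'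
              · exact h2 ⟨hv, by rwa [huniq i j' j hib hij] at hu⟩
              · apply hne1
                rw [hu, hv, hflip, if_neg hib]
          · rw [if_neg hne1]
    have := specNorm_star 1 one_pos x' (fun _ : Fin 1 => flip j) (fun _ => hfx j)
      (Function.injective_of_subsingleton _) (Γi i) key
    rw [this]
    simp
  have hzero : ∀ i : Fin N, (∀ j, i ∉ B j) → specNorm (Γi i) = 0 := by
    intro i hi
    have hz : Γi i = 0 := by
      ext u v
      rw [hΓi]
      by_cases hne1 : u i ≠ v i
      · rw [if_pos hne1, hΓ, if_neg]
        · simp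
        rintro (⟨hu, j', hv⟩ | ⟨hv, j', hu⟩)
        · exact hne1 (by rw [hu, hv, hflip, if_neg (hi j')])
        · exact hne1 (by rw [hu, hv, hflip, if_neg (hi j')])
      · rw [if_neg hne1]; simp
    rw [hz]
    simp [specNorm]
  obtain ⟨i0, hi0⟩ := hne ⟨0, hk⟩
  have hNE : Nonempty (Fin N) := ⟨i0⟩
  refine ⟨specNorm_star k hk x' flip hfx hinj Γ hΓ, le_antisymm ?_ ?_⟩
  · apply ciSup_le
    intro i
    by_cases h : ∃ j, i ∈ B j
    · rw [hcase i h]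
    · rw [hzero i (by push_neg at h; exact h)]; norm_num
  · have h1 : specNorm (Γi i0) = 1 := hcase i0 ⟨⟨0, hk⟩, hi0⟩
    calc (1 : ℝ) = specNorm (Γi i0) := h1.symm
      _ ≤ ⨆ i, specNorm (Γi i) := le_ciSup (f := fun i => specNorm (Γi i)) (Finite.bddAbove_range _) i0
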